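/- Let ρ > 0, μ₀ > 0, Ψ : ℝ → ℝ, let i ≥ 1 be a natural number, and let p : ℝ × ℝ → ℝ, P : ℝ → ℝ, and P_i, P_{i+1} : ℝ → ℝ with P_j(t) = ∫₀^∞ a^{j−1} e^{−ρa} p(a,t) da for j = i, i+1. Fix t ∈ ℝ and assume: (i) for each a ≥ 0, ∂p/∂t(a,t) + ∂p/∂a(a,t) + (μ₀ + Ψ(P(t))) p(a,t) = 0; (ii) a ↦ p(a,t) is continuously differentiable on [0,∞) and the functions a ↦ a^i e^{−ρa} p(a,t), a ↦ a^{i−1} e^{−ρa} p(a,t), a ↦ a^i e^{−ρa} ∂p/∂a(a,t), and a ↦ a^i e^{−ρa} ∂p/∂t(a,t) are integrable on [0,∞); (iii) a^i e^{−ρa} p(a,t) → 0 as a → ∞; (iv) P_{i+1} is differentiable at t with P_{i+1}′(t) = ∫₀^∞ a^i e^{−ρa} ∂p/∂t(a,t) da. Then P_{i+1}′(t) = i P_i(t) − (ρ + μ₀ + Ψ(P(t))) P_{i+1}(t). -/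

import Mathlib

open Real Set MeasureTheory Filter

/-- If the age density `p` satisfies the transport equation
`p_t + p_a + (μ₀ + Ψ(P(t))) p = 0` at time `t`, with the stated integrability, decay and
smoothness hypotheses, and differentiation under the integral sign is valid for the
moment `P_{i+1}(t) = ∫₀^∞ a^i e^{−ρa} p(a,t) da` (`i ≥ 1`), then
`P_{i+1}′(t) = i P_i(t) − (ρ + μ₀ + Ψ(P(t))) P_{i+1}(t)`. -/
theorem stmt_14 (ρ μ₀ : ℝ) (hρ : 0 < ρ) (hμ₀ : 0 < μ₀) (Ψ : ℝ → ℝ)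
    (i : ℕ) (hi : 1 ≤ i)
    (p : ℝ → ℝ → ℝ) (P : ℝ → ℝ) (Pi Pi1 : ℝ → ℝ) (t : ℝ) (pt pa : ℝ → ℝ)
    -- the moments
    (hPi : ∀ s : ℝ, Pi s = ∫ a in Set.Ioi (0 : ℝ), a ^ (i - 1) * Real.exp (-ρ * a) * p a s)
    (hPi1 : ∀ s : ℝ, Pi1 s = ∫ a in Set.Ioi (0 : ℝ), a ^ i * Real.exp (-ρ * a) * p a s)
    -- (i) the partial derivatives exist and the transport equation holds
    (hpt : ∀ a ∈ Set.Ici (0 : ℝ), HasDerivAt (fun s => p a s) (pt a) t)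
    (hpa : ∀ a ∈ Set.Ici (0 : ℝ), HasDerivAt (fun b => p b t) (pa a) a)
    (hPDE : ∀ a ∈ Set.Ici (0 : ℝ), pt a + pa a + (μ₀ + Ψ (P t)) * p a t = 0)
    -- (ii) smoothness and integrability on [0,∞)
    (hc : ContinuousOn (fun a => p a t) (Set.Ici 0))
    (hc' : ContinuousOn pa (Set.Ici 0))
    (hint1 : IntegrableOn (fun a : ℝ => a ^ i * Real.exp (-ρ * a) * p a t) (Set.Ici 0))
    (hint2 : IntegrableOn (fun a : ℝ => a ^ (i - 1) * Real.exp (-ρ * a) * p a t) (Set.Ici 0))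
    (hint3 : IntegrableOn (fun a : ℝ => a ^ i * Real.exp (-ρ * a) * pa a) (Set.Ici 0))
    (hint4 : IntegrableOn (fun a : ℝ => a ^ i * Real.exp (-ρ * a) * pt a) (Set.Ici 0))
    -- (iii) decay at infinity
    (hlim : Tendsto (fun a : ℝ => a ^ i * Real.exp (-ρ * a) * p a t) atTop (nhds 0))
    -- (iv) differentiation under the integral sign
    (hP' : HasDerivAt Pi1 (∫ a in Set.Ioi (0 : ℝ), a ^ i * Real.exp (-ρ * a) * pt a) t) :
    HasDerivAt Pi1 (i * Pi t - (ρ + μ₀ + Ψ (P t)) * Pi1 t) t := by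
  set c : ℝ := μ₀ + Ψ (P t) with hc_def
  -- F and its derivative
  set F : ℝ → ℝ := fun a => a ^ i * Real.exp (-ρ * a) * p a t with hF
  set F' : ℝ → ℝ := fun a =>
    (i : ℝ) * (a ^ (i - 1) * Real.exp (-ρ * a) * p a t)
      + (-ρ) * (a ^ i * Real.exp (-ρ * a) * p a t)
      + a ^ i * Real.exp (-ρ * a) * pa a with hF'
  have hderiv : ∀ a ∈ Set.Ici (0 : ℝ), HasDerivAt F (F' a) a := by
    intro a _
    have h1 : HasDerivAt (fun a : ℝ => a ^ i) ((i : ℝ) * a ^ (i - 1)) a :=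
      hasDerivAt_pow i a
    have h2 : HasDerivAt (fun a : ℝ => Real.exp (-ρ * a)) (-ρ * Real.exp (-ρ * a)) a := by
      have := ((hasDerivAt_id a).const_mul (-ρ)).exp
      simpa [mul_comm] using this
    have h3 : HasDerivAt (fun a : ℝ => a ^ i * Real.exp (-ρ * a) * p a t)
        (((i : ℝ) * a ^ (i - 1) * Real.exp (-ρ * a) + a ^ i * (-ρ * Real.exp (-ρ * a))) * p a t
          + a ^ i * Real.exp (-ρ * a) * pa a) a := ((h1.mul h2).mul (hpa a ‹_›))
    convert h3 using 1
    simp only [hF']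
    ring
  have hint1' : IntegrableOn (fun a : ℝ => a ^ i * Real.exp (-ρ * a) * p a t) (Set.Ioi 0) :=
    hint1.mono_set Set.Ioi_subset_Ici_self
  have hint2' : IntegrableOn (fun a : ℝ => a ^ (i - 1) * Real.exp (-ρ * a) * p a t)
      (Set.Ioi 0) := hint2.mono_set Set.Ioi_subset_Ici_self
  have hint3' : IntegrableOn (fun a : ℝ => a ^ i * Real.exp (-ρ * a) * pa a) (Set.Ioi 0) :=
    hint3.mono_set Set.Ioi_subset_Ici_self
  have hF'int : IntegrableOn F' (Set.Ioi 0) :=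
    ((hint2'.const_mul _).add (hint1'.const_mul _)).add hint3'
  have hFTC : ∫ a in Set.Ioi (0 : ℝ), F' a = 0 - F 0 :=
    integral_Ioi_of_hasDerivAt_of_tendsto' hderiv hF'int hlim
  have hF0 : F 0 = 0 := by
    simp [hF, zero_pow (by omega : i ≠ 0)]
  have hsplit : ∫ a in Set.Ioi (0 : ℝ), F' a
      = (i : ℝ) * Pi t + (-ρ) * Pi1 t
        + ∫ a in Set.Ioi (0 : ℝ), a ^ i * Real.exp (-ρ * a) * pa a := by
    have h1 : ∫ a in Set.Ioi (0 : ℝ), F' a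
        = (∫ a in Set.Ioi (0 : ℝ), ((i : ℝ) * (a ^ (i - 1) * Real.exp (-ρ * a) * p a t)
            + (-ρ) * (a ^ i * Real.exp (-ρ * a) * p a t)))
          + ∫ a in Set.Ioi (0 : ℝ), a ^ i * Real.exp (-ρ * a) * pa a :=
      integral_add ((hint2'.const_mul _).add (hint1'.const_mul _)) hint3'
    have h2 : (∫ a in Set.Ioi (0 : ℝ), ((i : ℝ) * (a ^ (i - 1) * Real.exp (-ρ * a) * p a t)
            + (-ρ) * (a ^ i * Real.exp (-ρ * a) * p a t)))
        = (∫ a in Set.Ioi (0 : ℝ), (i : ℝ) * (a ^ (i - 1) * Real.exp (-ρ * a) * p a t))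
          + ∫ a in Set.Ioi (0 : ℝ), (-ρ) * (a ^ i * Real.exp (-ρ * a) * p a t) :=
      integral_add (hint2'.const_mul _) (hint1'.const_mul _)
    rw [h1, h2, integral_const_mul, integral_const_mul, hPi, hPi1]
  have hpaint : ∫ a in Set.Ioi (0 : ℝ), a ^ i * Real.exp (-ρ * a) * pa a
      = ρ * Pi1 t - (i : ℝ) * Pi t := by
    have := hFTC
    rw [hsplit, hF0] at this
    linarith
  have hptval : ∫ a in Set.Ioi (0 : ℝ), a ^ i * Real.exp (-ρ * a) * pt a
      = (i : ℝ) * Pi t - (ρ + c) * Pi1 t := by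
    have hcong : ∀ a ∈ Set.Ioi (0 : ℝ),
        a ^ i * Real.exp (-ρ * a) * pt a
          = (-1 : ℝ) * (a ^ i * Real.exp (-ρ * a) * pa a)
            + (-c) * (a ^ i * Real.exp (-ρ * a) * p a t) := by
      intro a ha
      have h := hPDE a (Set.Ioi_subset_Ici_self ha)
      have : pt a = -pa a - c * p a t := by linarith
      rw [this]; ring
    rw [setIntegral_congr_fun (by measurability) hcong]
    have h3 : (∫ a in Set.Ioi (0 : ℝ), ((-1 : ℝ) * (a ^ i * Real.exp (-ρ * a) * pa a)
            + (-c) * (a ^ i * Real.exp (-ρ * a) * p a t)))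
        = (∫ a in Set.Ioi (0 : ℝ), (-1 : ℝ) * (a ^ i * Real.exp (-ρ * a) * pa a))
          + ∫ a in Set.Ioi (0 : ℝ), (-c) * (a ^ i * Real.exp (-ρ * a) * p a t) :=
      integral_add (hint3'.const_mul _) (hint1'.const_mul _)
    rw [h3, integral_const_mul, integral_const_mul, hpaint, ← hPi1]
    ring
  rw [hptval] at hP'
  convert hP' using 1
  rw [hc_def]; ring
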